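/- Regularization bias bound: suppose η ∈ H satisfies η(x₀) = 0, and let R_λ := (T_K + λI)^{-1} T_K. Then |(R_λ η)(x₀)| = |((R_λ - I)η)(x₀)| ≤ √λ · √(D(x₀;λ)) · ‖η‖_H, where D(x₀;λ) = ⟨K_{x₀}, (T_K+λI)^{-1} K_{x₀}⟩_H. -/
import Mathlib


open scoped RealInnerProductSpace

/-- Regularization bias bound: if `η ∈ H` satisfies `η(x₀) = ⟪η, K_{x₀}⟫ = 0` and
`u = R_λ η = (T_K+λI)⁻¹ T_K η`, then
`|(R_λ η)(x₀)| = |((R_λ - I)η)(x₀)| ≤ √λ √(D(x₀;λ)) ‖η‖_H`, where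
`D(x₀;λ) = ⟪K_{x₀}, (T_K+λI)⁻¹K_{x₀}⟫ = ⟪K_{x₀}, w⟫` with `(T_K+λI)w = K_{x₀}`. -/
theorem stmt4
    {H : Type*} [NormedAddCommGroup H] [InnerProductSpace ℝ H]
    {X : Type*} (Kmap : X → H) (T : H →L[ℝ] H)
    (hsym : ∀ h g : H, ⟪T h, g⟫ = ⟪h, T g⟫)
    (hpos : ∀ h : H, 0 ≤ ⟪h, T h⟫)
    (lam : ℝ) (hlam : 0 < lam) (x₀ : X) (η u w : H)
    (hη0 : ⟪η, Kmap x₀⟫ = 0)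
    (hu : T u + lam • u = T η)
    (hw : T w + lam • w = Kmap x₀) :
    |⟪u, Kmap x₀⟫| ≤ Real.sqrt lam * Real.sqrt ⟪Kmap x₀, w⟫ * ‖η‖ := by
  have hηTw : ⟪η, T w⟫ = -(lam * ⟪η, w⟫) := by
    have := hη0
    rw [← hw, inner_add_right, real_inner_smul_right] at this
    linarith
  have hkey : ⟪u, Kmap x₀⟫ = -(lam * ⟪η, w⟫) := by
    calc ⟪u, Kmap x₀⟫ = ⟪u, T w + lam • w⟫ := by rw [hw]
      _ = ⟪T u + lam • u, w⟫ := by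
          rw [inner_add_right, inner_add_left, real_inner_smul_right,
            real_inner_smul_left, hsym]
      _ = ⟪T η, w⟫ := by rw [hu]
      _ = ⟪η, T w⟫ := hsym η w
      _ = -(lam * ⟪η, w⟫) := hηTw
  have hKw : lam * ‖w‖ ^ 2 ≤ ⟪Kmap x₀, w⟫ := by
    have h1 : ⟪Kmap x₀, w⟫ = ⟪T w, w⟫ + lam * ⟪w, w⟫ := by
      rw [← hw, inner_add_left, real_inner_smul_left]
    have h2 : 0 ≤ ⟪w, T w⟫ := hpos w
    rw [hsym] at h1
    rw [h1, real_inner_self_eq_norm_sq]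
    nlinarith
  have hKw0 : 0 ≤ ⟪Kmap x₀, w⟫ := le_trans (by positivity) hKw
  have hlw : lam * ‖w‖ ≤ Real.sqrt lam * Real.sqrt ⟪Kmap x₀, w⟫ := by
    have : Real.sqrt (lam * ‖w‖ ^ 2) ≤ Real.sqrt ⟪Kmap x₀, w⟫ :=
      Real.sqrt_le_sqrt hKw
    rw [Real.sqrt_mul hlam.le, Real.sqrt_sq (norm_nonneg w)] at this
    calc lam * ‖w‖ = Real.sqrt lam * (Real.sqrt lam * ‖w‖) := by
          rw [← mul_assoc, Real.mul_self_sqrt hlam.le]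
      _ ≤ Real.sqrt lam * Real.sqrt ⟪Kmap x₀, w⟫ :=
          mul_le_mul_of_nonneg_left this (Real.sqrt_nonneg _)
  calc |⟪u, Kmap x₀⟫| = lam * |⟪η, w⟫| := by
        rw [hkey, abs_neg, abs_mul, abs_of_pos hlam]
    _ ≤ lam * (‖η‖ * ‖w‖) :=
        mul_le_mul_of_nonneg_left (abs_real_inner_le_norm η w) hlam.le
    _ = (lam * ‖w‖) * ‖η‖ := by ring
    _ ≤ Real.sqrt lam * Real.sqrt ⟪Kmap x₀, w⟫ * ‖η‖ :=
        mul_le_mul_of_nonneg_right hlw (norm_nonneg η)
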